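/- arXiv:1212.0455 — 5 statements merged into one kernel-verified Lean document; each statement's English description precedes it below -/
import Mathlib

section
/- Let Ω be an open subset of ℂᵐ, let ε > 0, and let φ₁,…,φₙ : Ω → ℂ be bounded holomorphic functions satisfying ∑_{i=1}^n |φᵢ(ω)|² ≥ ε² for every ω ∈ Ω. For ω ∈ Ω let P(ω) be the n×n complex matrix with entries P(ω)_{ij} = φᵢ(ω)·conj(φⱼ(ω)) / ∑_{k=1}^n |φₖ(ω)|² (the orthogonal projection of ℂⁿ onto the line spanned by (φ₁(ω),…,φₙ(ω))). Then the following are equivalent: (1) there exist bounded holomorphic functions ψ₁,…,ψₙ : Ω → ℂ with ∑_{i=1}^n φᵢ(ω)ψᵢ(ω) = 1 for every ω ∈ Ω; (6) there exists a function V : Ω → M_n(ℂ) such that (a) every entry of E(ω) := P(ω) + V(ω) is a bounded holomorphic function on Ω, and (b) V(ω) = P(ω) V(ω) (I_n − P(ω)) for every ω ∈ Ω. -/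
/-- The pointwise orthogonal projection matrix `P(ω)` of `ℂⁿ` onto the line spanned by
`(φ₁(ω), …, φₙ(ω))`, with entries `P(ω)ᵢⱼ = φᵢ(ω) conj(φⱼ(ω)) / ∑ₖ |φₖ(ω)|²`. -/
noncomputable def projMat {m n : ℕ} (φ : Fin n → (Fin m → ℂ) → ℂ) (ω : Fin m → ℂ) :
    Matrix (Fin n) (Fin n) ℂ :=
  fun i j => φ i ω * (starRingEnd ℂ) (φ j ω) / ((∑ k, ‖φ k ω‖ ^ 2 : ℝ) : ℂ)

namespace CoronaAux
open Matrix

lemma sum_conj {n : ℕ} (a : Fin n → ℂ) :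
    ∑ k, (starRingEnd ℂ) (a k) * a k = ((∑ k, ‖a k‖ ^ 2 : ℝ) : ℂ) := by
  push_cast
  exact Finset.sum_congr rfl fun k _ => RCLike.conj_mul (a k)

lemma projMat_sq {m n : ℕ} (φ : Fin n → (Fin m → ℂ) → ℂ) (ω : Fin m → ℂ)
    (hs : ((∑ k, ‖φ k ω‖ ^ 2 : ℝ) : ℂ) ≠ 0) :
    projMat φ ω * projMat φ ω = projMat φ ω := by
  set s : ℂ := ((∑ k, ‖φ k ω‖ ^ 2 : ℝ) : ℂ) with hsdef
  ext i j
  simp only [Matrix.mul_apply, projMat, ← hsdef]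
  have h1 : ∀ k ∈ Finset.univ,
      φ i ω * (starRingEnd ℂ) (φ k ω) / s * (φ k ω * (starRingEnd ℂ) (φ j ω) / s) =
      (φ i ω * (starRingEnd ℂ) (φ j ω) / (s * s)) * ((starRingEnd ℂ) (φ k ω) * φ k ω) :=
    fun k _ => by ring
  rw [Finset.sum_congr rfl h1, ← Finset.mul_sum, sum_conj, ← hsdef]
  field_simp

lemma projMat_mulVec {m n : ℕ} (φ : Fin n → (Fin m → ℂ) → ℂ) (ω : Fin m → ℂ)
    (hs : ((∑ k, ‖φ k ω‖ ^ 2 : ℝ) : ℂ) ≠ 0) :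
    projMat φ ω *ᵥ (fun i => φ i ω) = fun i => φ i ω := by
  set s : ℂ := ((∑ k, ‖φ k ω‖ ^ 2 : ℝ) : ℂ) with hsdef
  funext i
  simp only [Matrix.mulVec, dotProduct, projMat, ← hsdef]
  have h1 : ∀ k ∈ Finset.univ,
      φ i ω * (starRingEnd ℂ) (φ k ω) / s * φ k ω =
      (φ i ω / s) * ((starRingEnd ℂ) (φ k ω) * φ k ω) := fun k _ => by ring
  rw [Finset.sum_congr rfl h1, ← Finset.mul_sum, sum_conj, ← hsdef]
  field_simp

lemma mul_facts {n : ℕ} (P V : Matrix (Fin n) (Fin n) ℂ) (hP : P * P = P)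
    (hV : V = P * V * (1 - P)) : P * (P + V) = P + V ∧ (P + V) * P = P := by
  have hPV : P * V = V := by
    conv_lhs => rw [hV]
    rw [← Matrix.mul_assoc, ← Matrix.mul_assoc, hP, ← hV, hV]
  have hVP : V * P = 0 := by
    rw [hV, Matrix.mul_assoc, Matrix.sub_mul, Matrix.one_mul, hP, sub_self, Matrix.mul_zero]
  constructor
  · rw [Matrix.mul_add, hP, hPV]
  · rw [Matrix.add_mul, hP, hVP, add_zero]

end CoronaAux

set_option maxHeartbeats 1000000 in
open CoronaAux Matrix in
/-- Nikolski's lemma, Treil–Wick form.  For corona data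
`φ₁,…,φₙ ∈ H^∞(Ω)` with `∑ |φᵢ(ω)|² ≥ ε² > 0` on `Ω`, the corona problem is solvable iff
the projection `P(ω)` can be corrected by an off-diagonal term `V(ω)` (i.e.
`V = P V (I − P)`) so that `E = P + V` has bounded holomorphic entries on `Ω`. -/
theorem corona_iff_nikolski {m n : ℕ} (Ω : Set (Fin m → ℂ)) (hΩ : IsOpen Ω)
    (ε : ℝ) (hε : 0 < ε) (φ : Fin n → (Fin m → ℂ) → ℂ)
    (hφhol : ∀ i, DifferentiableOn ℂ (φ i) Ω)
    (hφbdd : ∀ i, ∃ C : ℝ, ∀ ω ∈ Ω, ‖φ i ω‖ ≤ C)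
    (hlow : ∀ ω ∈ Ω, ε ^ 2 ≤ ∑ i, ‖φ i ω‖ ^ 2) :
    -- (1): a bounded holomorphic corona solution
    (∃ ψ : Fin n → (Fin m → ℂ) → ℂ,
        (∀ i, DifferentiableOn ℂ (ψ i) Ω) ∧
        (∀ i, ∃ C : ℝ, ∀ ω ∈ Ω, ‖ψ i ω‖ ≤ C) ∧
        ∀ ω ∈ Ω, ∑ i, φ i ω * ψ i ω = 1) ↔
    -- (6): a correction V of P to a bounded holomorphic idempotent-valued E = P + V
    (∃ V : (Fin m → ℂ) → Matrix (Fin n) (Fin n) ℂ,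
        (∀ i j, DifferentiableOn ℂ (fun ω => projMat φ ω i j + V ω i j) Ω) ∧
        (∀ i j, ∃ C : ℝ, ∀ ω ∈ Ω, ‖projMat φ ω i j + V ω i j‖ ≤ C) ∧
        ∀ ω ∈ Ω, V ω = projMat φ ω * V ω * (1 - projMat φ ω)) := by
  have hspos : ∀ ω ∈ Ω, (0:ℝ) < ∑ k, ‖φ k ω‖ ^ 2 := fun ω hω =>
    lt_of_lt_of_le (by positivity) (hlow ω hω)
  have hsne : ∀ ω ∈ Ω, ((∑ k, ‖φ k ω‖ ^ 2 : ℝ) : ℂ) ≠ 0 := fun ω hω => by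
    exact_mod_cast ne_of_gt (hspos ω hω)
  constructor
  · rintro ⟨ψ, hψhol, hψbdd, hψone⟩
    refine ⟨fun ω => (Matrix.of fun i j => φ i ω * ψ j ω) - projMat φ ω, ?_, ?_, ?_⟩
    · intro i j
      have heq : (fun ω => projMat φ ω i j +
          ((Matrix.of fun i j => φ i ω * ψ j ω) - projMat φ ω) i j) =
          fun ω => φ i ω * ψ j ω := by
        funext ω
        rw [Matrix.sub_apply, Matrix.of_apply]
        ring
      rw [heq]
      exact (hφhol i).mul (hψhol j)
    · intro i j
      obtain ⟨C, hC⟩ := hφbdd i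
      obtain ⟨D, hD⟩ := hψbdd j
      refine ⟨C * D, fun ω hω => ?_⟩
      have heq : projMat φ ω i j +
          ((Matrix.of fun i j => φ i ω * ψ j ω) - projMat φ ω) i j = φ i ω * ψ j ω := by
        rw [Matrix.sub_apply, Matrix.of_apply]; ring
      rw [heq, norm_mul]
      exact mul_le_mul (hC ω hω) (hD ω hω) (norm_nonneg _)
        (le_trans (norm_nonneg _) (hC ω hω))
    · intro ω hω
      set s : ℂ := ((∑ k, ‖φ k ω‖ ^ 2 : ℝ) : ℂ) with hsdef
      have hs : s ≠ 0 := hsne ω hω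
      set P : Matrix (Fin n) (Fin n) ℂ := projMat φ ω with hPdef
      set E : Matrix (Fin n) (Fin n) ℂ := Matrix.of fun i j => φ i ω * ψ j ω with hE
      have hP2 : P * P = P := projMat_sq φ ω hs
      have hPE : P * E = E := by
        ext i j
        simp only [Matrix.mul_apply, hPdef, projMat, hE, Matrix.of_apply, ← hsdef]
        have h1 : ∀ k ∈ Finset.univ,
            φ i ω * (starRingEnd ℂ) (φ k ω) / s * (φ k ω * ψ j ω) =
            (φ i ω * ψ j ω / s) * ((starRingEnd ℂ) (φ k ω) * φ k ω) := fun k _ => by ring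
        rw [Finset.sum_congr rfl h1, ← Finset.mul_sum, sum_conj, ← hsdef]
        field_simp
      have hEP : E * P = P := by
        ext i j
        simp only [Matrix.mul_apply, hPdef, projMat, hE, Matrix.of_apply, ← hsdef]
        have h1 : ∀ k ∈ Finset.univ,
            φ i ω * ψ k ω * (φ k ω * (starRingEnd ℂ) (φ j ω) / s) =
            (φ i ω * (starRingEnd ℂ) (φ j ω) / s) * (φ k ω * ψ k ω) := fun k _ => by ring
        rw [Finset.sum_congr rfl h1, ← Finset.mul_sum, hψone ω hω, mul_one]
      show E - P = P * (E - P) * (1 - P)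
      have h1 : P * (E - P) = E - P := by rw [Matrix.mul_sub, hPE, hP2]
      have h2 : (E - P) * (1 - P) = E - P := by
        rw [Matrix.sub_mul, Matrix.mul_sub, Matrix.mul_sub, Matrix.mul_one, Matrix.mul_one,
          hEP, hP2]
        abel
      rw [h1, h2]
  · rintro ⟨V, hEhol, hEbdd, hVeq⟩
    classical
    set ψ : Fin n → (Fin m → ℂ) → ℂ := fun j ω =>
      (∑ k, (starRingEnd ℂ) (φ k ω) * (projMat φ ω k j + V ω k j)) /
        ((∑ k, ‖φ k ω‖ ^ 2 : ℝ) : ℂ) with hψdef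
    have key : ∀ ω ∈ Ω, (∀ i j, φ i ω * ψ j ω = projMat φ ω i j + V ω i j)
        ∧ ∑ i, φ i ω * ψ i ω = 1 := by
      intro ω hω
      set s : ℂ := ((∑ k, ‖φ k ω‖ ^ 2 : ℝ) : ℂ) with hsdef
      have hs : s ≠ 0 := hsne ω hω
      set P : Matrix (Fin n) (Fin n) ℂ := projMat φ ω with hPdef
      have hP2 : P * P = P := projMat_sq φ ω hs
      obtain ⟨hPE, hEP⟩ := mul_facts P (V ω) hP2 (hVeq ω hω)
      have hEntry : ∀ i j, φ i ω * ψ j ω = projMat φ ω i j + V ω i j := by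
        intro i j
        have h0 : (P * (P + V ω)) i j = (P + V ω) i j := by rw [hPE]
        have h1 : (P * (P + V ω)) i j =
            ∑ k, φ i ω * (starRingEnd ℂ) (φ k ω) / s * ((P + V ω) k j) := by
          simp only [Matrix.mul_apply, hPdef, projMat, ← hsdef]
        have h2 : φ i ω * ψ j ω =
            ∑ k, φ i ω * (starRingEnd ℂ) (φ k ω) / s * ((P + V ω) k j) := by
          rw [hψdef]
          simp only [← hsdef]
          rw [mul_div_assoc', Finset.mul_sum, Finset.sum_div]
          refine Finset.sum_congr rfl fun k _ => ?_
          rw [Matrix.add_apply]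
          ring
        rw [h2, ← h1, h0, Matrix.add_apply]
      refine ⟨hEntry, ?_⟩
      have hvec : (P + V ω) *ᵥ (fun i => φ i ω) = fun i => φ i ω := by
        have h3 := congrArg (· *ᵥ (fun i => φ i ω)) hEP
        simp only [← Matrix.mulVec_mulVec] at h3
        rw [hPdef] at h3
        rw [projMat_mulVec φ ω hs] at h3
        rwa [← hPdef] at h3
      have hEphi : ∀ k, ∑ i, (P + V ω) k i * φ i ω = φ k ω := fun k =>
        congrFun hvec k
      calc ∑ i, φ i ω * ψ i ω
          = ∑ i, ∑ k, (starRingEnd ℂ) (φ k ω) * ((P + V ω) k i * φ i ω) / s := by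
            refine Finset.sum_congr rfl fun i _ => ?_
            rw [hψdef]
            simp only [← hsdef]
            rw [mul_div_assoc', Finset.mul_sum, Finset.sum_div]
            refine Finset.sum_congr rfl fun k _ => ?_
            rw [Matrix.add_apply]
            ring
        _ = ∑ k, (starRingEnd ℂ) (φ k ω) * (∑ i, (P + V ω) k i * φ i ω) / s := by
            rw [Finset.sum_comm]
            refine Finset.sum_congr rfl fun k _ => ?_
            rw [Finset.mul_sum, Finset.sum_div]
        _ = (∑ k, (starRingEnd ℂ) (φ k ω) * φ k ω) / s := by
            rw [Finset.sum_div]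
            exact Finset.sum_congr rfl fun k _ => by rw [hEphi k]
        _ = 1 := by rw [sum_conj, ← hsdef, div_self hs]
    refine ⟨ψ, ?_, ?_, fun ω hω => (key ω hω).2⟩
    · intro j ω₀ hω₀
      have hex : ∃ i, φ i ω₀ ≠ 0 := by
        by_contra h
        push_neg at h
        have h2 : ε ^ 2 ≤ (0:ℝ) := by simpa [h] using hlow ω₀ hω₀
        nlinarith
      obtain ⟨i, hi⟩ := hex
      have hUopen : IsOpen (Ω ∩ (φ i) ⁻¹' {0}ᶜ) :=
        (hφhol i).continuousOn.isOpen_inter_preimage hΩ isOpen_compl_singleton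
      have hω₀U : ω₀ ∈ Ω ∩ (φ i) ⁻¹' {0}ᶜ := ⟨hω₀, by simpa using hi⟩
      have hsub : Ω ∩ (φ i) ⁻¹' {0}ᶜ ⊆ Ω := Set.inter_subset_left
      have hgE : DifferentiableOn ℂ (fun ω => projMat φ ω i j + V ω i j) (Ω ∩ (φ i) ⁻¹' {0}ᶜ) :=
        (hEhol i j).mono hsub
      have hgφ : DifferentiableOn ℂ (φ i) (Ω ∩ (φ i) ⁻¹' {0}ᶜ) := (hφhol i).mono hsub
      have hg : DifferentiableOn ℂ
          (fun ω => (projMat φ ω i j + V ω i j) / φ i ω) (Ω ∩ (φ i) ⁻¹' {0}ᶜ) :=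
        by
          simp only [div_eq_mul_inv]
          exact hgE.mul (hgφ.inv fun x hx => by simpa using hx.2)
      have heq : ∀ ω ∈ Ω ∩ (φ i) ⁻¹' {0}ᶜ, ψ j ω = (projMat φ ω i j + V ω i j) / φ i ω := by
        intro ω hω
        have h1 := ((key ω (hsub hω)).1 i j)
        have hne : φ i ω ≠ 0 := by simpa using hω.2
        rw [eq_div_iff hne, mul_comm]
        exact h1
      have hat : DifferentiableAt ℂ (ψ j) ω₀ := by
        have h2 : DifferentiableAt ℂ
            (fun ω => (projMat φ ω i j + V ω i j) / φ i ω) ω₀ :=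
          hg.differentiableAt (hUopen.mem_nhds hω₀U)
        refine h2.congr_of_eventuallyEq ?_
        filter_upwards [hUopen.mem_nhds hω₀U] with ω hω using heq ω hω
      exact hat.differentiableWithinAt
    · intro j
      choose C hC using fun k => hEbdd k j
      refine ⟨(∑ k, |C k|) / ε, fun ω hω => ?_⟩
      have hspos' := hspos ω hω
      rw [hψdef]
      simp only [norm_div]
      have hnorm_s : ‖((∑ k, ‖φ k ω‖ ^ 2 : ℝ) : ℂ)‖ = ∑ k, ‖φ k ω‖ ^ 2 := by
        rw [Complex.norm_real, Real.norm_of_nonneg (le_of_lt hspos')]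
      rw [hnorm_s]
      set S : ℝ := ∑ k, ‖φ k ω‖ ^ 2 with hSdef
      have hsqrt : ε ≤ Real.sqrt S := by
        rw [show ε = Real.sqrt (ε ^ 2) from (Real.sqrt_sq hε.le).symm]
        exact Real.sqrt_le_sqrt (hlow ω hω)
      have hBnonneg : (0:ℝ) ≤ ∑ k, |C k| := Finset.sum_nonneg fun k _ => abs_nonneg _
      have hbound : ‖∑ k, (starRingEnd ℂ) (φ k ω) * (projMat φ ω k j + V ω k j)‖
          ≤ Real.sqrt S * ∑ k, |C k| := by
        refine le_trans (norm_sum_le _ _) ?_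
        rw [Finset.mul_sum]
        refine Finset.sum_le_sum fun k _ => ?_
        rw [norm_mul, RCLike.norm_conj]
        have h1 : ‖φ k ω‖ ≤ Real.sqrt S := by
          rw [show ‖φ k ω‖ = Real.sqrt (‖φ k ω‖ ^ 2) from (Real.sqrt_sq (norm_nonneg _)).symm]
          exact Real.sqrt_le_sqrt (Finset.single_le_sum (f := fun k => ‖φ k ω‖ ^ 2)
            (fun k _ => by positivity) (Finset.mem_univ k))
        have h2 : ‖projMat φ ω k j + V ω k j‖ ≤ |C k| :=
          le_trans (hC k ω hω) (le_abs_self _)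
        exact mul_le_mul h1 h2 (norm_nonneg _) (Real.sqrt_nonneg _)
      rw [div_le_div_iff₀ hspos' hε]
      have h3 : ‖∑ k, (starRingEnd ℂ) (φ k ω) * (projMat φ ω k j + V ω k j)‖ * ε
          ≤ (Real.sqrt S * ∑ k, |C k|) * Real.sqrt S :=
        mul_le_mul hbound hsqrt hε.le (mul_nonneg (Real.sqrt_nonneg _) hBnonneg)
      have h4 : Real.sqrt S * Real.sqrt S = S := Real.mul_self_sqrt hspos'.le
      nlinarith [h3, h4]
end

section
/- Let H be a complex Hilbert space and let A be a commutative unital subalgebra of the bounded linear operators on H. Assume: (I) for every k ≥ 1, every bounded linear operator X : H → Hᵏ satisfying a⁽ᵏ⁾ ∘ X = X ∘ a for all a ∈ A is of the form X f = (a₁f, …, a_k f) for some a₁,…,a_k ∈ A; and (II) (the commutant lifting property, in the special case needed) for every n ≥ 1, every closed subspace S of Hⁿ invariant under a⁽ⁿ⁾ for all a ∈ A, and every bounded linear operator X : H → Hⁿ/S satisfying X ∘ a = ā ∘ X for all a ∈ A (where ā is the operator induced by a⁽ⁿ⁾ on the quotient Banach space Hⁿ/S, and π_S : Hⁿ → Hⁿ/S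 is the quotient map), there exists a bounded linear operator X̄ : H → Hⁿ with a⁽ⁿ⁾ ∘ X̄ = X̄ ∘ a for all a ∈ A, π_S ∘ X̄ = X, and ‖X̄‖ = ‖X‖. Then for any T₁,…,Tₙ ∈ A such that the operator N : Hⁿ → H, N(f₁,…,fₙ) = ∑_{i=1}^n Tᵢ fᵢ, is surjective, there exist S₁,…,Sₙ ∈ A with ∑_{i=1}^n Tᵢ Sᵢ = id_H. -/
/-- The diagonal (ampliation) action `a⁽ᵏ⁾` of an operator `a` on
`Hᵏ = PiLp 2 (fun _ : Fin k => H)`, acting as `a` in each coordinate. -/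
noncomputable def diagOp {H : Type*} [NormedAddCommGroup H] [NormedSpace ℂ H] {k : ℕ}
    (a : H →L[ℂ] H) (v : PiLp 2 (fun _ : Fin k => H)) : PiLp 2 (fun _ : Fin k => H) :=
  WithLp.toLp 2 (fun i => a (v i))

set_option maxHeartbeats 1000000 in
set_option synthInstance.maxHeartbeats 400000 in
/-- Theorem 6.3 of the paper.  Let `A` be a commutative unital algebra of
operators on a Hilbert space `H` such that (I) every module map `H → Hᵏ` is a column of
elements of `A`, and (II) `A` has the commutant lifting property.  If `T₁,…,Tₙ ∈ A` are
such that the row operator `N(f₁,…,fₙ) = ∑ Tᵢ fᵢ` is surjective, then there exist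
`S₁,…,Sₙ ∈ A` with `∑ Tᵢ Sᵢ = id`. -/
theorem clt_toeplitz_corona {H : Type*} [NormedAddCommGroup H] [InnerProductSpace ℂ H]
    [CompleteSpace H] (A : Subalgebra ℂ (H →L[ℂ] H))
    (hcomm : ∀ a ∈ A, ∀ b ∈ A, a * b = b * a)
    -- (I): module maps H → Hᵏ are columns of multipliers (Lemma 3.4)
    (hI : ∀ k : ℕ, 1 ≤ k → ∀ X : H →L[ℂ] PiLp 2 (fun _ : Fin k => H),
        (∀ a ∈ A, ∀ f : H, X (a f) = diagOp a (X f)) →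
        ∃ c : Fin k → H →L[ℂ] H, (∀ i, c i ∈ A) ∧ ∀ (f : H) (i : Fin k), X f i = c i f)
    -- (II): the commutant lifting (CLT) property (Definition 6.2, special case needed)
    (hII : ∀ k : ℕ, 1 ≤ k → ∀ S : Submodule ℂ (PiLp 2 (fun _ : Fin k => H)),
        IsClosed (S : Set (PiLp 2 (fun _ : Fin k => H))) →
        (∀ a ∈ A, ∀ v ∈ S, diagOp a v ∈ S) →
        ∀ X : H →L[ℂ] (PiLp 2 (fun _ : Fin k => H) ⧸ S),
        (∀ a ∈ A, ∀ f : H, ∀ v : PiLp 2 (fun _ : Fin k => H),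
            Submodule.Quotient.mk v = X f → X (a f) = Submodule.Quotient.mk (diagOp a v)) →
        ∃ Y : H →L[ℂ] PiLp 2 (fun _ : Fin k => H),
          (∀ a ∈ A, ∀ f : H, Y (a f) = diagOp a (Y f)) ∧
          (∀ f : H, S.mkQ (Y f) = X f) ∧ ‖Y‖ = ‖X‖)
    {n : ℕ} (hn : 1 ≤ n) (T : Fin n → H →L[ℂ] H) (hT : ∀ i, T i ∈ A)
    (hsurj : Function.Surjective (fun v : PiLp 2 (fun _ : Fin n => H) => ∑ i, T i (v i))) :
    ∃ S : Fin n → H →L[ℂ] H, (∀ i, S i ∈ A) ∧ ∀ f : H, ∑ i, T i (S i f) = f := by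

  classical
  set E := PiLp 2 (fun _ : Fin n => H) with hE
  haveI : CompleteSpace E := inferInstance
  let N : E →L[ℂ] H :=
    ∑ i, (T i).comp ((ContinuousLinearMap.proj i :
      (∀ _ : Fin n, H) →L[ℂ] H).comp
      (PiLp.continuousLinearEquiv 2 ℂ (fun _ : Fin n => H)).toContinuousLinearMap)
  have hN : ∀ v : E, N v = ∑ i, T i (v i) := by
    intro v
    simp only [N, ContinuousLinearMap.sum_apply, ContinuousLinearMap.comp_apply]
    rfl
  have hcom : ∀ a ∈ A, ∀ i : Fin n, ∀ x : H, a (T i x) = T i (a x) := by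
    intro a ha i x
    have h := hcomm a ha (T i) (hT i)
    calc a (T i x) = (a * T i) x := rfl
    _ = (T i * a) x := by rw [h]
    _ = T i (a x) := rfl
  have hNa : ∀ a ∈ A, ∀ v : E, N (diagOp a v) = a (N v) := by
    intro a ha v
    rw [hN, hN, map_sum]
    exact Finset.sum_congr rfl fun i _ => (hcom a ha i (v i)).symm
  let K : Submodule ℂ E := LinearMap.ker (N : E →ₗ[ℂ] H)
  have hKmem : ∀ v : E, v ∈ K ↔ N v = 0 := fun v => Iff.rfl
  have hKclosed : IsClosed (K : Set E) := ContinuousLinearMap.isClosed_ker N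
  haveI : IsClosed (K : Set E) := hKclosed
  have hKinv : ∀ a ∈ A, ∀ v ∈ K, diagOp a v ∈ K := by
    intro a ha v hv
    have h2 : N (diagOp a v) = a (N v) := hNa a ha v
    rw [(hKmem v).1 hv, map_zero] at h2
    exact (hKmem _).2 h2
  have hsurjN : Function.Surjective N := by
    intro y
    obtain ⟨v, hv⟩ := hsurj y
    exact ⟨v, by rw [hN]; exact hv⟩
  have hle : K ≤ LinearMap.ker (N : E →ₗ[ℂ] H) := le_rfl
  let Nbarl : (E ⧸ K) →ₗ[ℂ] H := K.liftQ (N : E →ₗ[ℂ] H) hle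
  have hNbarc : Continuous Nbarl := by
    rw [K.isOpenQuotientMap_mkQ.isQuotientMap.continuous_iff]
    exact N.continuous
  let Nbar : (E ⧸ K) →L[ℂ] H := ⟨Nbarl, hNbarc⟩
  have hNbar : ∀ v : E, Nbar (Submodule.Quotient.mk v) = N v := fun v => rfl
  have hker : LinearMap.ker (Nbar : (E ⧸ K) →ₗ[ℂ] H) = ⊥ := Submodule.ker_liftQ_eq_bot K _ hle le_rfl
  have hrange : LinearMap.range (Nbar : (E ⧸ K) →ₗ[ℂ] H) = ⊤ := by
    show LinearMap.range Nbarl = ⊤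
    rw [Submodule.range_liftQ]
    exact LinearMap.range_eq_top.2 hsurjN
  haveI : CompleteSpace (E ⧸ K) := Submodule.Quotient.completeSpace K
  let e : (E ⧸ K) ≃L[ℂ] H := ContinuousLinearEquiv.ofBijective Nbar hker hrange
  have he : ∀ q : E ⧸ K, e q = Nbar q := fun q =>
    congrFun (ContinuousLinearEquiv.coeFn_ofBijective Nbar hker hrange) q
  let X : H →L[ℂ] (E ⧸ K) := e.symm.toContinuousLinearMap
  have hXe : ∀ (v : E) (f : H), Submodule.Quotient.mk v = X f → N v = f := by
    intro v f h
    have h2 : e (Submodule.Quotient.mk v) = e (X f) := by rw [h]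
    rw [he, hNbar] at h2
    rwa [show e (X f) = f from e.apply_symm_apply f] at h2
  have hX : ∀ a ∈ A, ∀ f : H, ∀ v : E,
      Submodule.Quotient.mk v = X f → X (a f) = Submodule.Quotient.mk (diagOp a v) := by
    intro a ha f v hv
    have h1 : N (diagOp a v) = a f := by rw [hNa a ha v, hXe v f hv]
    have h2 : e (Submodule.Quotient.mk (diagOp a v)) = a f := by
      rw [he, hNbar]; exact h1
    calc X (a f) = e.symm (a f) := rfl
    _ = e.symm (e (Submodule.Quotient.mk (diagOp a v))) := by rw [h2]
    _ = Submodule.Quotient.mk (diagOp a v) := e.symm_apply_apply _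
  obtain ⟨Y, hY1, hY2, _⟩ := hII n hn K hKclosed hKinv X hX
  obtain ⟨c, hc1, hc2⟩ := hI n hn Y hY1
  refine ⟨c, hc1, fun f => ?_⟩
  have h1 : Submodule.Quotient.mk (Y f) = X f := hY2 f
  have h2 : N (Y f) = f := hXe (Y f) f h1
  rw [hN] at h2
  calc ∑ i, T i (c i f) = ∑ i, T i (Y f i) := by
        exact Finset.sum_congr rfl fun i _ => by rw [hc2 f i]
  _ = f := h2
end

section
/- Let Ω be a nonempty open subset of ℂᵐ, let n ≥ 1, and let φ₁,…,φₙ : Ω → ℂ be bounded holomorphic functions; write Φ(ω) = (φ₁(ω),…,φₙ(ω)) ∈ ℂⁿ. If the origin 0 ∈ ℂⁿ does not belong to the polynomial convex hull Pol(Φ(Ω)) of the (bounded) set Φ(Ω) = {Φ(ω) : ω ∈ Ω}, then there exist bounded holomorphic functions ψ₁,…,ψₙ : Ω → ℂ such that ∑_{i=1}^n φᵢ(ω)ψᵢ(ω) = 1 for every ω ∈ Ω. -/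
/-- The polynomial convex hull of a subset `S ⊆ ℂⁿ`:
`Pol(S) = { w : |p(w)| ≤ sup_{z ∈ S} |p(z)| for every polynomial p }`. -/
noncomputable def polyHull {n : ℕ} (S : Set (Fin n → ℂ)) : Set (Fin n → ℂ) :=
  {w | ∀ p : MvPolynomial (Fin n) ℂ,
      ‖MvPolynomial.eval w p‖ ≤ sSup ((fun z => ‖MvPolynomial.eval z p‖) '' S)}

open MvPolynomial

/-- Every multivariate polynomial decomposes as constant term plus `∑ zᵢ qᵢ(z)`. -/
lemma exists_decomp {n : ℕ} (p : MvPolynomial (Fin n) ℂ) :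
    ∃ q : Fin n → MvPolynomial (Fin n) ℂ, ∀ z : Fin n → ℂ,
      eval z p = eval 0 p + ∑ i, z i * eval z (q i) := by
  induction p using MvPolynomial.induction_on with
  | C a => exact ⟨0, fun z => by simp⟩
  | add p₁ p₂ h₁ h₂ =>
      obtain ⟨q₁, hq₁⟩ := h₁; obtain ⟨q₂, hq₂⟩ := h₂
      refine ⟨fun i => q₁ i + q₂ i, fun z => ?_⟩
      simp only [map_add, hq₁ z, hq₂ z, mul_add, Finset.sum_add_distrib]
      ring
  | mul_X p₁ i h₁ =>
      refine ⟨Function.update 0 i p₁, fun z => ?_⟩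
      have : ∑ j, z j * eval z (Function.update (0 : Fin n → MvPolynomial (Fin n) ℂ) i p₁ j)
          = z i * eval z p₁ := by
        rw [Finset.sum_eq_single i]
        · simp
        · intro j _ hj; simp [Function.update_of_ne hj]
        · simp
      simp [this, mul_comm]

/-- Evaluated polynomials of bounded holomorphic data are holomorphic. -/
lemma eval_diff {m n : ℕ} {Ω : Set (Fin m → ℂ)} {φ : Fin n → (Fin m → ℂ) → ℂ}
    (hφhol : ∀ i, DifferentiableOn ℂ (φ i) Ω) (p : MvPolynomial (Fin n) ℂ) :
    DifferentiableOn ℂ (fun ω => eval (fun i => φ i ω) p) Ω := by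
  induction p using MvPolynomial.induction_on with
  | C a => simpa using differentiableOn_const a
  | add p₁ p₂ h₁ h₂ => simpa [Pi.add_def] using h₁.add h₂
  | mul_X p₁ i h₁ => simpa [Pi.mul_def] using h₁.mul (hφhol i)

/-- Evaluated polynomials of bounded holomorphic data are bounded. -/
lemma eval_bdd {m n : ℕ} {Ω : Set (Fin m → ℂ)} {φ : Fin n → (Fin m → ℂ) → ℂ}
    (hφbdd : ∀ i, ∃ C : ℝ, ∀ ω ∈ Ω, ‖φ i ω‖ ≤ C) (p : MvPolynomial (Fin n) ℂ) :
    ∃ C : ℝ, 0 ≤ C ∧ ∀ ω ∈ Ω, ‖eval (fun i => φ i ω) p‖ ≤ C := by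
  induction p using MvPolynomial.induction_on with
  | C a => exact ⟨‖a‖, norm_nonneg a, fun ω _ => by simp⟩
  | add p₁ p₂ h₁ h₂ =>
      obtain ⟨C₁, hC₁, h₁⟩ := h₁; obtain ⟨C₂, hC₂, h₂⟩ := h₂
      refine ⟨C₁ + C₂, by linarith, fun ω hω => ?_⟩
      calc ‖eval (fun i => φ i ω) (p₁ + p₂)‖
          ≤ ‖eval (fun i => φ i ω) p₁‖ + ‖eval (fun i => φ i ω) p₂‖ := by
            simp only [map_add]; exact norm_add_le _ _
        _ ≤ C₁ + C₂ := add_le_add (h₁ ω hω) (h₂ ω hω)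
  | mul_X p₁ i h₁ =>
      obtain ⟨C₁, hC₁, h₁⟩ := h₁
      obtain ⟨D, hD⟩ := hφbdd i
      have hD0 : 0 ≤ D ∨ Ω = ∅ := by
        by_cases h : Ω = ∅
        · exact Or.inr h
        · obtain ⟨ω, hω⟩ := Set.nonempty_iff_ne_empty.mpr h
          exact Or.inl ((norm_nonneg _).trans (hD ω hω))
      refine ⟨C₁ * max D 0, mul_nonneg hC₁ (le_max_right _ _), fun ω hω => ?_⟩
      calc ‖eval (fun i => φ i ω) (p₁ * X i)‖
          = ‖eval (fun i => φ i ω) p₁‖ * ‖φ i ω‖ := by simp [norm_mul]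
        _ ≤ C₁ * max D 0 := by
            apply mul_le_mul (h₁ ω hω) ((hD ω hω).trans (le_max_left _ _))
              (norm_nonneg _) hC₁

/-- Theorem 8.2 of the paper. -/
theorem corona_of_zero_not_in_polyHull {m n : ℕ} (hn : 1 ≤ n)
    (Ω : Set (Fin m → ℂ)) (hΩopen : IsOpen Ω) (hΩne : Ω.Nonempty)
    (φ : Fin n → (Fin m → ℂ) → ℂ)
    (hφhol : ∀ i, DifferentiableOn ℂ (φ i) Ω)
    (hφbdd : ∀ i, ∃ C : ℝ, ∀ ω ∈ Ω, ‖φ i ω‖ ≤ C)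
    (h0 : (0 : Fin n → ℂ) ∉ polyHull ((fun ω => fun i => φ i ω) '' Ω)) :
    ∃ ψ : Fin n → (Fin m → ℂ) → ℂ,
      (∀ i, DifferentiableOn ℂ (ψ i) Ω) ∧
      (∀ i, ∃ C : ℝ, ∀ ω ∈ Ω, ‖ψ i ω‖ ≤ C) ∧
      ∀ ω ∈ Ω, ∑ i, φ i ω * ψ i ω = 1 := by
  rw [polyHull] at h0
  simp only [Set.mem_setOf_eq, not_forall, not_le] at h0
  obtain ⟨p, hp⟩ := h0
  set M : ℝ := sSup ((fun z => ‖MvPolynomial.eval z p‖) '' ((fun ω => fun i => φ i ω) '' Ω))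
  set c : ℂ := MvPolynomial.eval 0 p
  -- every value of p on Φ(Ω) is ≤ M
  obtain ⟨Cp, hCp0, hCp⟩ := eval_bdd hφbdd p
  have hbdd : BddAbove ((fun z => ‖MvPolynomial.eval z p‖) '' ((fun ω => fun i => φ i ω) '' Ω)) := by
    refine ⟨Cp, ?_⟩
    rintro x ⟨z, ⟨ω, hω, rfl⟩, rfl⟩
    exact hCp ω hω
  have hval : ∀ ω ∈ Ω, ‖MvPolynomial.eval (fun i => φ i ω) p‖ ≤ M := by
    intro ω hω
    exact le_csSup hbdd ⟨fun i => φ i ω, ⟨ω, hω, rfl⟩, rfl⟩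
  have hMc : M < ‖c‖ := hp
  set δ : ℝ := ‖c‖ - M with hδ
  have hδpos : 0 < δ := by rw [hδ]; linarith
  -- denominator u ω = c - p(Φ ω)
  set u : (Fin m → ℂ) → ℂ := fun ω => c - MvPolynomial.eval (fun i => φ i ω) p with hu
  have hulb : ∀ ω ∈ Ω, δ ≤ ‖u ω‖ := by
    intro ω hω
    have := norm_sub_norm_le c (MvPolynomial.eval (fun i => φ i ω) p)
    have h2 := hval ω hω
    simp only [hu, hδ]
    linarith [norm_sub_norm_le c (MvPolynomial.eval (fun i => φ i ω) p)]
  have hune : ∀ ω ∈ Ω, u ω ≠ 0 := by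
    intro ω hω h
    have := hulb ω hω
    rw [h, norm_zero] at this
    linarith
  obtain ⟨q, hq⟩ := exists_decomp p
  have hudiff : DifferentiableOn ℂ u Ω := by
    have : DifferentiableOn ℂ (fun ω => c - MvPolynomial.eval (fun i => φ i ω) p) Ω :=
      (differentiableOn_const c).sub (eval_diff hφhol p)
    exact this
  refine ⟨fun i ω => - MvPolynomial.eval (fun j => φ j ω) (q i) / u ω, ?_, ?_, ?_⟩
  · intro i
    have h1 : DifferentiableOn ℂ (fun ω => - MvPolynomial.eval (fun j => φ j ω) (q i)) Ω :=
      (eval_diff hφhol (q i)).neg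
    have h2 : DifferentiableOn ℂ (fun ω => (u ω)⁻¹) Ω := hudiff.inv hune
    exact (h1.mul h2).congr (fun ω _ => by simp [div_eq_mul_inv])
  · intro i
    obtain ⟨Ci, hCi0, hCi⟩ := eval_bdd hφbdd (q i)
    refine ⟨Ci / δ, fun ω hω => ?_⟩
    rw [norm_div, norm_neg]
    exact div_le_div₀ (by exact hCi0) (hCi ω hω) hδpos (hulb ω hω)
  · intro ω hω
    have key := hq (fun j => φ j ω)
    have hu0 := hune ω hω
    have : ∑ i, φ i ω * (- MvPolynomial.eval (fun j => φ j ω) (q i) / u ω)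
        = (∑ i, (fun j => φ j ω) i * MvPolynomial.eval (fun j => φ j ω) (q i)) * (-1 / u ω) := by
      rw [Finset.sum_mul]
      apply Finset.sum_congr rfl
      intro i _
      field_simp
    rw [this]
    have hsum : ∑ i, (fun j => φ j ω) i * MvPolynomial.eval (fun j => φ j ω) (q i)
        = MvPolynomial.eval (fun j => φ j ω) p - c := by
      rw [key]; ring
    rw [hsum]
    have : MvPolynomial.eval (fun j => φ j ω) p - c = -u ω := by simp [hu]
    rw [this]
    field_simp
end

section
/- Let X be a nonempty compact subset of ℂⁿ and let A denote the closure, in the Banach algebra C(X, ℂ) of continuous complex-valued functions on X with the supremum norm, of the subalgebra of restrictions to X of polynomial functions p ∈ ℂ[z₁,…,zₙ]. If the origin 0 ∈ ℂⁿ does not belong to the polynomial convex hull Pol(X), then there exist σ₁,…,σₙ ∈ A such that ∑_{i=1}^n zᵢ σᵢ(z₁,…,zₙ) = 1 for every (z₁,…,zₙ) ∈ X (where zᵢ denotes the i-th coordinate function restricted to X). -/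
set_option maxHeartbeats 1000000
set_option synthInstance.maxHeartbeats 200000

/-- key step in Theorem 8.2.  Let `K ⊆ ℂⁿ` be a nonempty compact set and
`A` the closure in `C(K, ℂ)` of the restrictions of polynomials.  If `0 ∉ Pol(K)`, then
there exist `σ₁,…,σₙ ∈ A` with `∑ zᵢ σᵢ(z) = 1` on `K`. -/
theorem coordinate_ideal_contains_one {n : ℕ} (K : Set (Fin n → ℂ))
    [Nonempty K] [CompactSpace K]
    (h0 : (0 : Fin n → ℂ) ∉ polyHull K) :
    ∃ σ : Fin n → C(K, ℂ),
      (∀ i, σ i ∈ closure {f : C(K, ℂ) |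
          ∃ p : MvPolynomial (Fin n) ℂ, ∀ z : K, f z = MvPolynomial.eval (z : Fin n → ℂ) p}) ∧
      ∀ z : K, ∑ i, (z : Fin n → ℂ) i * σ i z = 1 := by
  classical
  -- the coordinate functions as continuous maps
  set ζf : Fin n → C(K, ℂ) :=
    fun i => ⟨fun z => (z : Fin n → ℂ) i, (continuous_apply i).comp continuous_subtype_val⟩ with hζf
  set Φ : MvPolynomial (Fin n) ℂ →ₐ[ℂ] C(K, ℂ) := MvPolynomial.aeval ζf with hΦdef
  have hΦ : ∀ (p : MvPolynomial (Fin n) ℂ) (z : K),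
      Φ p z = MvPolynomial.eval (z : Fin n → ℂ) p := by
    intro p z
    have h1 : (ContinuousMap.evalAlgHom ℂ ℂ z).comp Φ
        = MvPolynomial.aeval (fun i => (z : Fin n → ℂ) i) := by
      rw [hΦdef, MvPolynomial.comp_aeval]; rfl
    have h2 := congrArg (fun g => g p) h1
    simp only [AlgHom.comp_apply] at h2
    have h3 : MvPolynomial.aeval (fun i => (z : Fin n → ℂ) i) p
        = MvPolynomial.eval (z : Fin n → ℂ) p := by
      rw [MvPolynomial.aeval_def, Algebra.algebraMap_self]; rfl
    exact h2.trans h3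
  set A : Subalgebra ℂ C(K, ℂ) := Φ.range.topologicalClosure with hAdef
  haveI : CompleteSpace A :=
    (Subalgebra.isClosed_topologicalClosure _).completeSpace_coe
  haveI : NormOneClass A := ⟨show ‖((1 : A) : C(K, ℂ))‖ = 1 by rw [OneMemClass.coe_one, norm_one]⟩
  -- the coordinate functions as elements of `A`
  have hζmem : ∀ i, ζf i ∈ A := by
    intro i
    exact Subalgebra.le_topologicalClosure _ ⟨MvPolynomial.X i, by simp [hΦdef]⟩
  set ζ : Fin n → A := fun i => ⟨ζf i, hζmem i⟩ with hζ
  -- the ideal generated by the coordinate functions is all of `A`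
  have htop : Ideal.span (Set.range ζ) = ⊤ := by
    by_contra h
    obtain ⟨M, hM, hle⟩ := Ideal.exists_le_maximal _ h
    haveI := hM
    set χ : WeakDual.characterSpace ℂ A := M.toCharacterSpace with hχ
    apply h0
    intro p
    have hz : ∀ i, χ (ζ i) = 0 := fun i =>
      M.toCharacterSpace_apply_eq_zero_of_mem (hle (Ideal.subset_span ⟨i, rfl⟩))
    set φ : A →ₐ[ℂ] ℂ := WeakDual.CharacterSpace.equivAlgHom χ with hφ
    have hφχ : ∀ a : A, φ a = χ a := fun a => rfl
    -- value of the character at `aeval ζ p`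
    have key : φ (MvPolynomial.aeval ζ p) = MvPolynomial.eval (0 : Fin n → ℂ) p := by
      have h2 := MvPolynomial.comp_aeval_apply (f := ζ) φ p
      have h3 : (fun i => φ (ζ i)) = fun _ : Fin n => (0 : ℂ) := by
        funext i; rw [hφχ, hz]
      rw [h2, h3]
      rw [MvPolynomial.aeval_def, Algebra.algebraMap_self]; rfl
    -- the coercion of `aeval ζ p` to `C(K, ℂ)` is `Φ p`
    have hcoe : ((MvPolynomial.aeval ζ p : A) : C(K, ℂ)) = Φ p := by
      have h2 := MvPolynomial.comp_aeval_apply (f := ζ) A.val p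
      exact h2
    have hnorm : ‖MvPolynomial.eval (0 : Fin n → ℂ) p‖ ≤ ‖(MvPolynomial.aeval ζ p : A)‖ := by
      rw [← key]
      exact spectrum.norm_le_norm_of_mem (AlgHom.apply_mem_spectrum φ _)
    have hnorm2 : ‖(MvPolynomial.aeval ζ p : A)‖ = ‖Φ p‖ := by
      rw [show ‖(MvPolynomial.aeval ζ p : A)‖
        = ‖((MvPolynomial.aeval ζ p : A) : C(K, ℂ))‖ from rfl, hcoe]
    have hsup : ‖Φ p‖ = sSup ((fun z => ‖MvPolynomial.eval z p‖) '' K) := by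
      rw [ContinuousMap.norm_eq_iSup_norm, sSup_image']
      congr 1
      funext z
      rw [hΦ]
    calc ‖MvPolynomial.eval (0 : Fin n → ℂ) p‖ ≤ ‖(MvPolynomial.aeval ζ p : A)‖ := hnorm
      _ = sSup ((fun z => ‖MvPolynomial.eval z p‖) '' K) := by rw [hnorm2, hsup]
  -- extract the coefficients
  have h1mem : (1 : A) ∈ Ideal.span (Set.range ζ) := by rw [htop]; trivial
  obtain ⟨c, hc⟩ := Ideal.mem_span_range_iff_exists_fun.mp h1mem
  refine ⟨fun i => (c i : C(K, ℂ)), ?_, ?_⟩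
  · intro i
    have hset : {f : C(K, ℂ) |
        ∃ p : MvPolynomial (Fin n) ℂ, ∀ z : K, f z = MvPolynomial.eval (z : Fin n → ℂ) p}
        = (Φ.range : Set C(K, ℂ)) := by
      ext f
      constructor
      · rintro ⟨p, hp⟩
        refine ⟨p, ?_⟩
        show Φ p = f
        ext z; rw [hΦ, hp]
      · rintro ⟨p, hp⟩
        have hp' : Φ p = f := hp
        exact ⟨p, fun z => by rw [← hp', hΦ]⟩
    rw [hset, ← Subalgebra.topologicalClosure_coe]
    exact (c i).2
  · intro z
    have := congrArg (fun f : A => (f : C(K, ℂ)) z) hc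
    rw [show (((∑ i, c i * ζ i : A) : C(K, ℂ))) = ∑ i, (c i : C(K, ℂ)) * ζf i by
      push_cast; rfl] at this
    rw [ContinuousMap.sum_apply] at this
    simp only [ContinuousMap.mul_apply] at this
    calc ∑ i, (z : Fin n → ℂ) i * (c i : C(K, ℂ)) z
        = ∑ i, (c i : C(K, ℂ)) z * ζf i z := by
          refine Finset.sum_congr rfl fun i _ => ?_
          rw [mul_comm]; rfl
      _ = 1 := this.trans rfl
end

section
/- Let Ω be a nonempty open subset of ℂᵐ, let n ≥ 1, and let φ₁,…,φₙ : Ω → ℂ be bounded holomorphic functions; write Φ(ω) = (φ₁(ω),…,φₙ(ω)) ∈ ℂⁿ. If there exists a polynomial p ∈ ℂ[z₁,…,zₙ] and a constant c with |p(Φ(ω))| ≤ c for all ω ∈ Ω and c < |p(0)|, then there exist bounded holomorphic functions ψ₁,…,ψₙ : Ω → ℂ such that ∑_{i=1}^n φᵢ(ω)ψᵢ(ω) = 1 for every ω ∈ Ω. -/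
open MvPolynomial

/-- Every multivariate polynomial admits, at the level of evaluations, a Taylor-type
decomposition `p(x) = p(0) + ∑ i, x i * qᵢ(x)`. -/
lemma mv_decomp {n : ℕ} (p : MvPolynomial (Fin n) ℂ) :
    ∃ q : Fin n → MvPolynomial (Fin n) ℂ,
      ∀ x : Fin n → ℂ,
        eval x p = eval (0 : Fin n → ℂ) p + ∑ i, x i * eval x (q i) := by
  induction p using MvPolynomial.induction_on with
  | C a => exact ⟨0, fun x => by simp⟩
  | add p q hp hq =>
      obtain ⟨qp, hqp⟩ := hp
      obtain ⟨qq, hqq⟩ := hq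
      refine ⟨qp + qq, fun x => ?_⟩
      simp [hqp, hqq, mul_add, Finset.sum_add_distrib]
      ring
  | mul_X p i hp =>
      obtain ⟨q, hq⟩ := hp
      refine ⟨fun j => q j * X i + if j = i then C (eval (0 : Fin n → ℂ) p) else 0,
        fun x => ?_⟩
      have : ∀ j, x j * eval x (q j * X i + if j = i then C (eval (0 : Fin n → ℂ) p) else 0)
          = x j * eval x (q j) * x i + if j = i then x i * eval (0 : Fin n → ℂ) p else 0 := by
        intro j
        by_cases h : j = i <;> simp [h] <;> ring
      simp only [this, Finset.sum_add_distrib, Finset.sum_ite_eq', Finset.mem_univ, if_true]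
      have hx := hq x
      simp only [eval_mul, eval_X]
      rw [hx]
      simp only [eval_zero] at *
      rw [add_mul, Finset.sum_mul, mul_comm (constantCoeff p) (x i), add_comm]
      simp

lemma mv_bound {n : ℕ} (q : MvPolynomial (Fin n) ℂ) (Cb : Fin n → ℝ) :
    ∃ D : ℝ, ∀ x : Fin n → ℂ, (∀ i, ‖x i‖ ≤ Cb i) → ‖eval x q‖ ≤ D := by
  refine ⟨∑ d ∈ q.support, ‖coeff d q‖ * ∏ i, (max (Cb i) 0) ^ d i, fun x hx => ?_⟩
  rw [MvPolynomial.eval_eq']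
  refine (norm_sum_le _ _).trans (Finset.sum_le_sum fun d _ => ?_)
  rw [norm_mul]
  refine mul_le_mul_of_nonneg_left ?_ (norm_nonneg _)
  rw [norm_prod]
  refine Finset.prod_le_prod (fun i _ => norm_nonneg _) (fun i _ => ?_)
  rw [norm_pow]
  exact pow_le_pow_left₀ (norm_nonneg _) ((hx i).trans (le_max_left _ _)) _

lemma mv_diff {m n : ℕ} (Ω : Set (Fin m → ℂ)) (φ : Fin n → (Fin m → ℂ) → ℂ)
    (hφ : ∀ i, DifferentiableOn ℂ (φ i) Ω) (q : MvPolynomial (Fin n) ℂ) :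
    DifferentiableOn ℂ (fun ω => eval (fun i => φ i ω) q) Ω := by
  induction q using MvPolynomial.induction_on with
  | C a => simpa using differentiableOn_const (a : ℂ)
  | add p q hp hq => simp only [map_add]; exact hp.add hq
  | mul_X p i hp => simp only [map_mul, eval_X]; exact hp.mul (hφ i)

/-- Corollary 8.5 of the paper.  If a single polynomial `p` satisfies
`|p(Φ(ω))| ≤ c < |p(0)|` for all `ω ∈ Ω`, then the corona problem for the bounded
holomorphic data `φ₁,…,φₙ` on `Ω` has an affirmative solution. -/
theorem corona_of_polynomial_certificate {m n : ℕ} (hn : 1 ≤ n)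
    (Ω : Set (Fin m → ℂ)) (hΩopen : IsOpen Ω) (hΩne : Ω.Nonempty)
    (φ : Fin n → (Fin m → ℂ) → ℂ)
    (hφhol : ∀ i, DifferentiableOn ℂ (φ i) Ω)
    (hφbdd : ∀ i, ∃ C : ℝ, ∀ ω ∈ Ω, ‖φ i ω‖ ≤ C)
    (p : MvPolynomial (Fin n) ℂ) (c : ℝ)
    (hpc : ∀ ω ∈ Ω, ‖MvPolynomial.eval (fun i => φ i ω) p‖ ≤ c)
    (hc : c < ‖MvPolynomial.eval (0 : Fin n → ℂ) p‖) :
    ∃ ψ : Fin n → (Fin m → ℂ) → ℂ,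
      (∀ i, DifferentiableOn ℂ (ψ i) Ω) ∧
      (∀ i, ∃ C : ℝ, ∀ ω ∈ Ω, ‖ψ i ω‖ ≤ C) ∧
      ∀ ω ∈ Ω, ∑ i, φ i ω * ψ i ω = 1 := by
  obtain ⟨q, hq⟩ := mv_decomp p
  set e0 : ℂ := eval (0 : Fin n → ℂ) p with he0
  set s : (Fin m → ℂ) → ℂ := fun ω => eval (fun i => φ i ω) p - e0 with hs
  -- lower bound on ‖s‖
  have hslb : ∀ ω ∈ Ω, ‖e0‖ - c ≤ ‖s ω‖ := by
    intro ω hω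
    have := hpc ω hω
    calc ‖e0‖ - c ≤ ‖e0‖ - ‖eval (fun i => φ i ω) p‖ := by linarith
    _ ≤ ‖eval (fun i => φ i ω) p - e0‖ := by
        have := norm_sub_norm_le (eval (fun i => φ i ω) p) e0
        have := norm_sub_norm_le e0 (eval (fun i => φ i ω) p)
        rw [norm_sub_rev] at this
        linarith
    _ = ‖s ω‖ := rfl
  have hcpos : 0 < ‖e0‖ - c := by linarith
  have hsne : ∀ ω ∈ Ω, s ω ≠ 0 := by
    intro ω hω h0
    have := hslb ω hω
    rw [h0, norm_zero] at this
    linarith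
  refine ⟨fun i ω => eval (fun j => φ j ω) (q i) / s ω, ?_, ?_, ?_⟩
  · intro i
    have hsd : DifferentiableOn ℂ s Ω :=
      (mv_diff Ω φ hφhol p).sub (differentiableOn_const e0)
    have : DifferentiableOn ℂ (fun ω => eval (fun j => φ j ω) (q i) * (s ω)⁻¹) Ω :=
      (mv_diff Ω φ hφhol (q i)).mul (hsd.inv hsne)
    simpa [div_eq_mul_inv] using this
  · intro i
    choose Cb hCb using hφbdd
    obtain ⟨D, hD⟩ := mv_bound (q i) Cb
    refine ⟨D / (‖e0‖ - c), fun ω hω => ?_⟩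
    rw [norm_div]
    have h1 : ‖eval (fun j => φ j ω) (q i)‖ ≤ D := hD _ (fun j => hCb j ω hω)
    have h2 := hslb ω hω
    have hDnn : 0 ≤ D := le_trans (norm_nonneg _) h1
    exact div_le_div₀ hDnn h1 hcpos h2
  · intro ω hω
    have hsum : ∑ i, φ i ω * eval (fun j => φ j ω) (q i) = s ω := by
      have := hq (fun i => φ i ω)
      simp only [hs]
      rw [this]; ring
    have : ∑ i, φ i ω * (eval (fun j => φ j ω) (q i) / s ω)
        = (∑ i, φ i ω * eval (fun j => φ j ω) (q i)) / s ω := by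
      rw [Finset.sum_div]
      exact Finset.sum_congr rfl fun i _ => (mul_div_assoc _ _ _).symm
    rw [this, hsum, div_self (hsne ω hω)]
end
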